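/- Let G be the complete directed graph on V with weights w : E → {0,1} and let M be a matching of G. Construct the undirected weighted graph G' = (V',E') as follows: for each v ∈ V add vertices v_in, v_out; for each directed edge (u,v) of G add vertices e¹_uv, e²_uv, an edge {e¹_uv, e²_uv} of weight 0, and edges {u_out, e¹_uv} and {v_in, e²_uv}, each of weight w(u,v)/2; for each M-hit 2-cycle on vertices u,v add vertices a_{u,v}, b_{u,v} and weight-0 edges {a_{u,v}, e¹_uv}, {a_{u,v}, e²_vu}, {b_{u,v}, e¹_vu}, {b_{u,v}, e²_uv}. Then: (1) for every perfect matching N of G', the set C̃(N) of edges/half-edges of G̃ defined by including the half-edge (u, x_{(u,v)}) exactly when {u_out, e¹_uv} ∈ N and the half-edge (x_{(u,v)}, v) exactly when {v_in, e²_uv} ∈ N (and, for edges (u,v) not split in G̃, including the whole edge (u,v) exactly when both {u_out, e¹_uv} ∈ N and {v_in, e²_uv} ∈ N) is a cycle cover that evades M, and w(C̃(N)) = w(N); (2) if N is a maximum weight perfect matching of G', then w(C̃(N)) ≥ OPT, where OPT is the maximum weight of a Hamiltonian cycle of G (assuming |V| ≥ 3). -/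

import Mathlib

open Finset

/-- `T` is a Hamiltonian cycle (tour) of the complete directed graph on `V`. -/
def IsHamCycle {V : Type*} [Fintype V] [DecidableEq V] (T : Finset (V × V)) : Prop :=
  ∃ σ : Equiv.Perm V, σ.IsCycle ∧ σ.support = Finset.univ ∧
    T = Finset.univ.image (fun v => (v, σ v))

/-- `M` is a matching: a set of directed edges (with distinct endpoints) that are
pairwise vertex-disjoint. -/
def IsMatching {V : Type*} (M : Finset (V × V)) : Prop :=
  (∀ e ∈ M, e.1 ≠ e.2) ∧
  ∀ e ∈ M, ∀ f ∈ M, e ≠ f →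
    e.1 ≠ f.1 ∧ e.1 ≠ f.2 ∧ e.2 ≠ f.1 ∧ e.2 ≠ f.2

/-- The 2-cycle on `u, v` is `M`-hit: both its edges have weight 1 and one of
them belongs to `M`.  (Both edges of an `M`-hit 2-cycle are split in `G̃`.) -/
def MHit {V : Type*} (w : V × V → ℕ) (M : Finset (V × V)) (u v : V) : Prop :=
  u ≠ v ∧ w (u, v) = 1 ∧ w (v, u) = 1 ∧ ((u, v) ∈ M ∨ (v, u) ∈ M)

instance {V : Type*} [DecidableEq V] (w : V × V → ℕ) (M : Finset (V × V)) (u v : V) :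
    Decidable (MHit w M u v) := by unfold MHit; infer_instance

/-- Vertices of the auxiliary undirected graph `G'`: `vin v = v_in`,
`vout v = v_out`, `e1 u v = e¹_uv`, `e2 u v = e²_uv`, and for each `M`-hit
2-cycle, gadget vertices `ga u v = a_{u,v}` and `gb u v = b_{u,v}` indexed by the
edge `(u,v)` of `M` in the 2-cycle. -/
inductive GPVert (V : Type*) where
  | vin : V → GPVert V
  | vout : V → GPVert V
  | e1 : V → V → GPVert V
  | e2 : V → V → GPVert V
  | ga : V → V → GPVert V
  | gb : V → V → GPVert V
  deriving DecidableEq, Fintype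

/-- The genuine vertices of `G'` (the other terms of `GPVert V` are unused). -/
def Genuine {V : Type*} (w : V × V → ℕ) (M : Finset (V × V)) : GPVert V → Prop
  | .vin _ => True
  | .vout _ => True
  | .e1 u v => u ≠ v
  | .e2 u v => u ≠ v
  | .ga u v => (u, v) ∈ M ∧ MHit w M u v
  | .gb u v => (u, v) ∈ M ∧ MHit w M u v

instance {V : Type*} [DecidableEq V] (w : V × V → ℕ) (M : Finset (V × V)) :
    DecidablePred (Genuine (V := V) w M) := fun x => by
  cases x <;> simp only [Genuine] <;> infer_instance

/-- The edges of `G'` (one orientation each): for every edge `(u,v)` of `G` the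
edge `{e¹_uv, e²_uv}` and the edges `{u_out, e¹_uv}`, `{v_in, e²_uv}`, and for
every `M`-hit 2-cycle (with `(u,v) ∈ M`) the four gadget edges
`{a_{u,v}, e¹_uv}`, `{a_{u,v}, e²_vu}`, `{b_{u,v}, e¹_vu}`, `{b_{u,v}, e²_uv}`. -/
inductive GPAdjBase {V : Type*} (w : V × V → ℕ) (M : Finset (V × V)) :
    GPVert V → GPVert V → Prop where
  | mid (u v : V) (h : u ≠ v) : GPAdjBase w M (.e1 u v) (.e2 u v)
  | outE (u v : V) (h : u ≠ v) : GPAdjBase w M (.vout u) (.e1 u v)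
  | inE (u v : V) (h : u ≠ v) : GPAdjBase w M (.vin v) (.e2 u v)
  | ga1 (u v : V) (hm : (u, v) ∈ M) (hh : MHit w M u v) :
      GPAdjBase w M (.ga u v) (.e1 u v)
  | ga2 (u v : V) (hm : (u, v) ∈ M) (hh : MHit w M u v) :
      GPAdjBase w M (.ga u v) (.e2 v u)
  | gb1 (u v : V) (hm : (u, v) ∈ M) (hh : MHit w M u v) :
      GPAdjBase w M (.gb u v) (.e1 v u)
  | gb2 (u v : V) (hm : (u, v) ∈ M) (hh : MHit w M u v) :
      GPAdjBase w M (.gb u v) (.e2 u v)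

/-- Undirected adjacency in `G'`. -/
def GPAdj {V : Type*} (w : V × V → ℕ) (M : Finset (V × V)) (x y : GPVert V) : Prop :=
  GPAdjBase w M x y ∨ GPAdjBase w M y x

/-- A perfect matching of `G'`, encoded as an involution `f` without fixed points
on the genuine vertices, matching each genuine vertex to an adjacent vertex. -/
def IsPMofGP {V : Type*} (w : V × V → ℕ) (M : Finset (V × V))
    (f : GPVert V → GPVert V) : Prop :=
  ∀ x : GPVert V, Genuine w M x → f (f x) = x ∧ GPAdj w M x (f x)

/-- The weight of an edge of `G'`: the edges `{u_out, e¹_uv}` and `{v_in, e²_uv}`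
have weight `w(u,v)/2`, all other edges weight `0`. -/
def gpw {V : Type*} [DecidableEq V] (w : V × V → ℕ) : GPVert V → GPVert V → ℚ
  | .vout u, .e1 u' v => if u = u' then (w (u', v) : ℚ) / 2 else 0
  | .e1 u' v, .vout u => if u = u' then (w (u', v) : ℚ) / 2 else 0
  | .vin v, .e2 u v' => if v = v' then (w (u, v') : ℚ) / 2 else 0
  | .e2 u v', .vin v => if v = v' then (w (u, v') : ℚ) / 2 else 0
  | _, _ => 0

/-- The weight `w(N)` of the perfect matching of `G'` encoded by `f` (each matched
pair is seen from both of its endpoints, whence the division by `2`). -/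
def pmWeight {V : Type*} [Fintype V] [DecidableEq V] (w : V × V → ℕ)
    (M : Finset (V × V)) (f : GPVert V → GPVert V) : ℚ :=
  (∑ x : GPVert V, if Genuine w M x then gpw w x (f x) else 0) / 2

/-- The edges of `G̃`: `whole u v` is an unsplit edge `(u,v)`; `half1 u v` is the
half-edge `(u, x_{(u,v)})` and `half2 u v` the half-edge `(x_{(u,v)}, v)` of a
split edge `(u,v)`. -/
inductive TilE (V : Type*) where
  | whole : V → V → TilE V
  | half1 : V → V → TilE V
  | half2 : V → V → TilE V
  deriving DecidableEq, Fintype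

/-- Weight of an edge of `G̃`: a whole edge has weight `w(u,v)`, each half-edge of
`(u,v)` has weight `w(u,v)/2`. -/
def tilw {V : Type*} (w : V × V → ℕ) : TilE V → ℚ
  | .whole u v => (w (u, v) : ℚ)
  | .half1 u v => (w (u, v) : ℚ) / 2
  | .half2 u v => (w (u, v) : ℚ) / 2

/-- The edge of `G̃` is outgoing at the original vertex `x ∈ V`. -/
def tilOutAt {V : Type*} (x : V) : TilE V → Prop
  | .whole u _ => u = x
  | .half1 u _ => u = x
  | .half2 _ _ => False

/-- The edge of `G̃` is incoming at the original vertex `x ∈ V`. -/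
def tilInAt {V : Type*} (x : V) : TilE V → Prop
  | .whole _ v => v = x
  | .half1 _ _ => False
  | .half2 _ v => v = x

instance {V : Type*} [DecidableEq V] (x : V) : DecidablePred (tilOutAt (V := V) x) :=
  fun e => by cases e <;> simp only [tilOutAt] <;> infer_instance

instance {V : Type*} [DecidableEq V] (x : V) : DecidablePred (tilInAt (V := V) x) :=
  fun e => by cases e <;> simp only [tilInAt] <;> infer_instance

/-- The edge actually belongs to `G̃`: whole edges are exactly the unsplit edges
(`u ≠ v`, not in an `M`-hit 2-cycle), half-edges exist exactly for split edges. -/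
def TilValid {V : Type*} (w : V × V → ℕ) (M : Finset (V × V)) : TilE V → Prop
  | .whole u v => u ≠ v ∧ ¬ MHit w M u v
  | .half1 u v => MHit w M u v
  | .half2 u v => MHit w M u v

/-- `C` is a cycle cover that evades the matching `M` (Definition 1 of the paper):
(i) every original vertex has exactly one outgoing and one incoming edge of `C`;
(ii) for every `M`-hit 2-cycle on `u, v`, `C` contains zero or two edges among the
four half-edges on `u, v`; moreover if `C` contains only one half-edge of `(u,v)`
then it contains exactly one half-edge of `(v,u)`, one of the two being incident
with `u` and the other with `v`. -/
def IsEvadingCC {V : Type*} [Fintype V] [DecidableEq V] (w : V × V → ℕ)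
    (M : Finset (V × V)) (C : Finset (TilE V)) : Prop :=
  (∀ e ∈ C, TilValid w M e) ∧
  (∀ x : V, (C.filter fun e => tilOutAt x e).card = 1 ∧
            (C.filter fun e => tilInAt x e).card = 1) ∧
  ∀ u v : V, MHit w M u v →
    ((({TilE.half1 u v, TilE.half2 u v, TilE.half1 v u, TilE.half2 v u} : Finset (TilE V))
        ∩ C).card = 0 ∨
     (({TilE.half1 u v, TilE.half2 u v, TilE.half1 v u, TilE.half2 v u} : Finset (TilE V))
        ∩ C).card = 2) ∧
    (TilE.half1 u v ∈ C ∧ TilE.half2 u v ∉ C →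
      TilE.half1 v u ∈ C ∧ TilE.half2 v u ∉ C) ∧
    (TilE.half2 u v ∈ C ∧ TilE.half1 u v ∉ C →
      TilE.half2 v u ∈ C ∧ TilE.half1 v u ∉ C)

/-- Membership of an edge of `G̃` in `C̃(N)` for the perfect matching `N` of `G'`
encoded by `f`: a half-edge `(u, x_{(u,v)})` is included iff `{u_out, e¹_uv} ∈ N`,
a half-edge `(x_{(u,v)}, v)` iff `{v_in, e²_uv} ∈ N`, and an unsplit whole edge
`(u,v)` iff both `{u_out, e¹_uv} ∈ N` and `{v_in, e²_uv} ∈ N`. -/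
def CNpred {V : Type*} (w : V × V → ℕ) (M : Finset (V × V))
    (f : GPVert V → GPVert V) : TilE V → Prop
  | .whole u v => u ≠ v ∧ ¬ MHit w M u v ∧
      f (.vout u) = .e1 u v ∧ f (.vin v) = .e2 u v
  | .half1 u v => MHit w M u v ∧ f (.vout u) = .e1 u v
  | .half2 u v => MHit w M u v ∧ f (.vin v) = .e2 u v

instance {V : Type*} [DecidableEq V] (w : V × V → ℕ) (M : Finset (V × V))
    (f : GPVert V → GPVert V) : DecidablePred (CNpred w M f) := fun e => by
  cases e <;> simp only [CNpred] <;> infer_instance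

/-- The set `C̃(N)` of edges of `G̃` induced by the perfect matching of `G'`
encoded by `f`. -/
def CN {V : Type*} [Fintype V] [DecidableEq V] (w : V × V → ℕ)
    (M : Finset (V × V)) (f : GPVert V → GPVert V) : Finset (TilE V) :=
  Finset.univ.filter (CNpred w M f)


section Helpers

variable {V : Type*} [DecidableEq V] {w : V × V → ℕ} {M : Finset (V × V)}
  {f : GPVert V → GPVert V} {u v : V} {y : GPVert V}

lemma MHit.symm (h : MHit w M u v) : MHit w M v u :=
  ⟨h.1.symm, h.2.2.1, h.2.1, h.2.2.2.symm⟩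

lemma not_rev_mem (hM : IsMatching M) (h : (u, v) ∈ M) : (v, u) ∉ M := by
  intro h'
  have hne : u ≠ v := hM.1 _ h
  exact (hM.2 _ h _ h' (by simp [Prod.ext_iff]; rintro rfl; exact fun h2 => hne rfl)).2.1 rfl

lemma adj_vout_shape (h : GPAdj w M (.vout u) y) : ∃ v, u ≠ v ∧ y = .e1 u v := by
  rcases h with h | h
  · cases h with
    | outE u v hv => exact ⟨v, hv, rfl⟩
  · cases h

lemma adj_vin_shape (h : GPAdj w M (.vin v) y) : ∃ u, u ≠ v ∧ y = .e2 u v := by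
  rcases h with h | h
  · cases h with
    | inE u v hv => exact ⟨u, hv, rfl⟩
  · cases h

lemma adj_e1_shape (h : GPAdj w M (.e1 u v) y) :
    y = .e2 u v ∨ y = .vout u ∨ (y = .ga u v ∧ (u, v) ∈ M ∧ MHit w M u v) ∨
      (y = .gb v u ∧ (v, u) ∈ M ∧ MHit w M v u) := by
  rcases h with h | h
  · cases h with
    | mid u v h => exact Or.inl rfl
  · cases h with
    | outE => exact Or.inr (Or.inl rfl)
    | ga1 u v hm hh => exact Or.inr (Or.inr (Or.inl ⟨rfl, hm, hh⟩))
    | gb1 u v hm hh => exact Or.inr (Or.inr (Or.inr ⟨rfl, hm, hh⟩))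

lemma adj_e2_shape (h : GPAdj w M (.e2 u v) y) :
    y = .e1 u v ∨ y = .vin v ∨ (y = .gb u v ∧ (u, v) ∈ M ∧ MHit w M u v) ∨
      (y = .ga v u ∧ (v, u) ∈ M ∧ MHit w M v u) := by
  rcases h with h | h
  · cases h
  · cases h with
    | mid u v h => exact Or.inl rfl
    | inE => exact Or.inr (Or.inl rfl)
    | gb2 u v hm hh => exact Or.inr (Or.inr (Or.inl ⟨rfl, hm, hh⟩))
    | ga2 u v hm hh => exact Or.inr (Or.inr (Or.inr ⟨rfl, hm, hh⟩))

lemma adj_ga_shape (h : GPAdj w M (.ga u v) y) : y = .e1 u v ∨ y = .e2 v u := by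
  rcases h with h | h
  · cases h with
    | ga1 => exact Or.inl rfl
    | ga2 => exact Or.inr rfl
  · cases h

lemma adj_gb_shape (h : GPAdj w M (.gb u v) y) : y = .e1 v u ∨ y = .e2 u v := by
  rcases h with h | h
  · cases h with
    | gb1 => exact Or.inl rfl
    | gb2 => exact Or.inr rfl
  · cases h

lemma pair_iff (hf : IsPMofGP w M f) {x y : GPVert V} (hx : Genuine w M x)
    (hy : Genuine w M y) : f x = y ↔ f y = x :=
  ⟨fun h => h ▸ (hf x hx).1, fun h => h ▸ (hf y hy).1⟩

end Helpers
section Helpers2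
set_option linter.unusedSectionVars false

variable {V : Type*} [DecidableEq V] {w : V × V → ℕ} {M : Finset (V × V)}
  {f : GPVert V → GPVert V} {u v : V}

/-- The successor of `u` read off from `f`. -/
def outF (f : GPVert V → GPVert V) (u : V) : V :=
  match f (.vout u) with
  | .e1 _ v => v
  | _ => u

/-- The predecessor of `v` read off from `f`. -/
def inF (f : GPVert V → GPVert V) (v : V) : V :=
  match f (.vin v) with
  | .e2 u _ => u
  | _ => v

lemma outF_spec (hf : IsPMofGP w M f) (u : V) :
    u ≠ outF f u ∧ f (.vout u) = .e1 u (outF f u) := by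
  obtain ⟨v, hv, he⟩ := adj_vout_shape (hf (.vout u) trivial).2
  have h : outF f u = v := by unfold outF; rw [he]
  rw [h]; exact ⟨hv, he⟩

lemma inF_spec (hf : IsPMofGP w M f) (v : V) :
    inF f v ≠ v ∧ f (.vin v) = .e2 (inF f v) v := by
  obtain ⟨u, hu, he⟩ := adj_vin_shape (hf (.vin v) trivial).2
  have h : inF f v = u := by unfold inF; rw [he]
  rw [h]; exact ⟨hu, he⟩

lemma gen_vout : Genuine w M (.vout u) := trivial
lemma gen_vin : Genuine w M (.vin v) := trivial
lemma gen_e1 (h : u ≠ v) : Genuine w M (.e1 u v) := h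
lemma gen_e2 (h : u ≠ v) : Genuine w M (.e2 u v) := h

lemma vout_iff (hf : IsPMofGP w M f) : f (.vout u) = .e1 u v ↔ v = outF f u := by
  obtain ⟨_, he⟩ := outF_spec hf u
  constructor
  · intro h
    have := he.symm.trans h
    simpa using this.symm
  · rintro rfl; exact he

lemma vin_iff (hf : IsPMofGP w M f) : f (.vin v) = .e2 u v ↔ u = inF f v := by
  obtain ⟨_, he⟩ := inF_spec hf v
  constructor
  · intro h
    have := he.symm.trans h
    simpa using this.symm
  · rintro rfl; exact he

lemma out_imp_in (hf : IsPMofGP w M f) (hmh : ¬ MHit w M u v) (huv : u ≠ v)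
    (h : f (.vout u) = .e1 u v) : f (.vin v) = .e2 u v := by
  have h1 : f (.e1 u v) = .vout u := (pair_iff hf gen_vout (gen_e1 huv)).mp h
  rcases adj_e2_shape (hf (.e2 u v) huv).2 with h2 | h2 | ⟨_, _, hh⟩ | ⟨_, _, hh⟩
  · have h3 := (pair_iff hf (gen_e2 huv) (gen_e1 huv)).mp h2
    rw [h1] at h3; simp at h3
  · exact (pair_iff hf (gen_e2 huv) gen_vin).mp h2
  · exact absurd hh hmh
  · exact absurd hh.symm hmh

lemma in_imp_out (hf : IsPMofGP w M f) (hmh : ¬ MHit w M u v) (huv : u ≠ v)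
    (h : f (.vin v) = .e2 u v) : f (.vout u) = .e1 u v := by
  have h1 : f (.e2 u v) = .vin v := (pair_iff hf gen_vin (gen_e2 huv)).mp h
  rcases adj_e1_shape (hf (.e1 u v) huv).2 with h2 | h2 | ⟨_, _, hh⟩ | ⟨_, _, hh⟩
  · have h3 := (pair_iff hf (gen_e1 huv) (gen_e2 huv)).mp h2
    rw [h1] at h3; simp at h3
  · exact (pair_iff hf (gen_e1 huv) gen_vout).mp h2
  · exact absurd hh hmh
  · exact absurd hh.symm hmh

end Helpers2
section Helpers3
set_option linter.unusedSectionVars false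

variable {V : Type*} [Fintype V] [DecidableEq V] {w : V × V → ℕ} {M : Finset (V × V)}
  {f : GPVert V → GPVert V} {u v : V}

lemma mem_CN {e : TilE V} : e ∈ CN w M f ↔ CNpred w M f e := by
  simp [CN]

lemma outdeg_set (hf : IsPMofGP w M f) (x : V) :
    ((CN w M f).filter fun e => tilOutAt x e) =
      {if MHit w M x (outF f x) then TilE.half1 x (outF f x) else TilE.whole x (outF f x)} := by
  obtain ⟨hne, he⟩ := outF_spec hf x
  ext e
  simp only [Finset.mem_filter, Finset.mem_singleton, mem_CN]
  constructor
  · rintro ⟨hc, ho⟩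
    cases e with
    | whole a b =>
      obtain ⟨hab, hmh, h1, h2⟩ := hc
      have hax : a = x := ho
      subst hax
      have hb : b = outF f a := (vout_iff hf).mp h1
      subst hb
      rw [if_neg hmh]
    | half1 a b =>
      obtain ⟨hmh, h1⟩ := hc
      have hax : a = x := ho
      subst hax
      have hb : b = outF f a := (vout_iff hf).mp h1
      subst hb
      rw [if_pos hmh]
    | half2 a b => exact ho.elim
  · intro h
    subst h
    by_cases hmh : MHit w M x (outF f x)
    · rw [if_pos hmh]
      exact ⟨⟨hmh, he⟩, rfl⟩
    · rw [if_neg hmh]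
      exact ⟨⟨hne, hmh, he, out_imp_in hf hmh hne he⟩, rfl⟩

lemma indeg_set (hf : IsPMofGP w M f) (x : V) :
    ((CN w M f).filter fun e => tilInAt x e) =
      {if MHit w M (inF f x) x then TilE.half2 (inF f x) x else TilE.whole (inF f x) x} := by
  obtain ⟨hne, he⟩ := inF_spec hf x
  ext e
  simp only [Finset.mem_filter, Finset.mem_singleton, mem_CN]
  constructor
  · rintro ⟨hc, ho⟩
    cases e with
    | whole a b =>
      obtain ⟨hab, hmh, h1, h2⟩ := hc
      have hbx : b = x := ho
      subst hbx
      have ha : a = inF f b := (vin_iff hf).mp h2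
      subst ha
      rw [if_neg hmh]
    | half2 a b =>
      obtain ⟨hmh, h2⟩ := hc
      have hbx : b = x := ho
      subst hbx
      have ha : a = inF f b := (vin_iff hf).mp h2
      subst ha
      rw [if_pos hmh]
    | half1 a b => exact ho.elim
  · intro h
    subst h
    by_cases hmh : MHit w M (inF f x) x
    · rw [if_pos hmh]
      exact ⟨⟨hmh, he⟩, rfl⟩
    · rw [if_neg hmh]
      exact ⟨⟨hne, hmh, in_imp_out hf hmh hne he, he⟩, rfl⟩

end Helpers3
section Helpers4
set_option linter.unusedSectionVars false

variable {V : Type*} [DecidableEq V] {w : V × V → ℕ} {M : Finset (V × V)}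
  {f : GPVert V → GPVert V} {u v : V}

lemma gadget_char (hf : IsPMofGP w M f) (hM : IsMatching M)
    (hm : (u, v) ∈ M) (hh : MHit w M u v) :
    (f (.e1 u v) ≠ .vout u ∧ f (.e2 u v) ≠ .vin v ∧ f (.e1 v u) ≠ .vout v ∧ f (.e2 v u) ≠ .vin u) ∨
    (f (.e1 u v) = .vout u ∧ f (.e2 u v) = .vin v ∧ f (.e1 v u) ≠ .vout v ∧ f (.e2 v u) ≠ .vin u) ∨
    (f (.e1 u v) ≠ .vout u ∧ f (.e2 u v) ≠ .vin v ∧ f (.e1 v u) = .vout v ∧ f (.e2 v u) = .vin u) ∨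
    (f (.e1 u v) = .vout u ∧ f (.e2 u v) ≠ .vin v ∧ f (.e1 v u) = .vout v ∧ f (.e2 v u) ≠ .vin u) ∨
    (f (.e1 u v) ≠ .vout u ∧ f (.e2 u v) = .vin v ∧ f (.e1 v u) ≠ .vout v ∧ f (.e2 v u) = .vin u) := by
  have huv : u ≠ v := hh.1
  have hvu : v ≠ u := huv.symm
  have hrev : (v, u) ∉ M := not_rev_mem hM hm
  have hgag : Genuine w M (.ga u v) := ⟨hm, hh⟩
  have hgbg : Genuine w M (.gb u v) := ⟨hm, hh⟩
  have s1 : f (.e1 u v) = .e2 u v ∨ f (.e1 u v) = .vout u ∨ f (.e1 u v) = .ga u v := by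
    rcases adj_e1_shape (hf (.e1 u v) huv).2 with h|h|⟨h,_⟩|⟨_,h,_⟩
    exacts [Or.inl h, Or.inr (Or.inl h), Or.inr (Or.inr h), absurd h hrev]
  have s2 : f (.e2 u v) = .e1 u v ∨ f (.e2 u v) = .vin v ∨ f (.e2 u v) = .gb u v := by
    rcases adj_e2_shape (hf (.e2 u v) huv).2 with h|h|⟨h,_⟩|⟨_,h,_⟩
    exacts [Or.inl h, Or.inr (Or.inl h), Or.inr (Or.inr h), absurd h hrev]
  have s3 : f (.e1 v u) = .e2 v u ∨ f (.e1 v u) = .vout v ∨ f (.e1 v u) = .gb u v := by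
    rcases adj_e1_shape (hf (.e1 v u) hvu).2 with h|h|⟨_,h,_⟩|⟨h,_⟩
    exacts [Or.inl h, Or.inr (Or.inl h), absurd h hrev, Or.inr (Or.inr h)]
  have s4 : f (.e2 v u) = .e1 v u ∨ f (.e2 v u) = .vin u ∨ f (.e2 v u) = .ga u v := by
    rcases adj_e2_shape (hf (.e2 v u) hvu).2 with h|h|⟨_,h,_⟩|⟨h,_⟩
    exacts [Or.inl h, Or.inr (Or.inl h), absurd h hrev, Or.inr (Or.inr h)]
  rcases adj_ga_shape (hf (.ga u v) hgag).2 with hga | hga <;>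
    rcases adj_gb_shape (hf (.gb u v) hgbg).2 with hgb | hgb
  · -- ga ↦ e1 u v, gb ↦ e1 v u
    have h1 : f (.e1 u v) = .ga u v := (pair_iff hf hgag (gen_e1 huv)).mp hga
    have h3 : f (.e1 v u) = .gb u v := (pair_iff hf hgbg (gen_e1 hvu)).mp hgb
    have nA : f (.e1 u v) ≠ .vout u := by rw [h1]; simp
    have nC : f (.e1 v u) ≠ .vout v := by rw [h3]; simp
    have hB : f (.e2 u v) = .vin v := by
      rcases s2 with h|h|h
      · have h5 := (pair_iff hf (gen_e2 huv) (gen_e1 huv)).mp h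
        rw [h1] at h5; simp at h5
      · exact h
      · have h5 := (pair_iff hf (gen_e2 huv) hgbg).mp h
        rw [hgb] at h5; simp at h5
    have hD : f (.e2 v u) = .vin u := by
      rcases s4 with h|h|h
      · have h5 := (pair_iff hf (gen_e2 hvu) (gen_e1 hvu)).mp h
        rw [h3] at h5; simp at h5
      · exact h
      · have h5 := (pair_iff hf (gen_e2 hvu) hgag).mp h
        rw [hga] at h5; simp at h5
    exact Or.inr (Or.inr (Or.inr (Or.inr ⟨nA, hB, nC, hD⟩)))
  · -- ga ↦ e1 u v, gb ↦ e2 u v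
    have h1 : f (.e1 u v) = .ga u v := (pair_iff hf hgag (gen_e1 huv)).mp hga
    have h2 : f (.e2 u v) = .gb u v := (pair_iff hf hgbg (gen_e2 huv)).mp hgb
    have nA : f (.e1 u v) ≠ .vout u := by rw [h1]; simp
    have nB : f (.e2 u v) ≠ .vin v := by rw [h2]; simp
    rcases s3 with h3 | h3 | h3
    · have h4 : f (.e2 v u) = .e1 v u := (pair_iff hf (gen_e1 hvu) (gen_e2 hvu)).mp h3
      exact Or.inl ⟨nA, nB, by rw [h3]; simp, by rw [h4]; simp⟩
    · have h4 : f (.e2 v u) = .vin u := by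
        rcases s4 with h|h|h
        · have h5 := (pair_iff hf (gen_e2 hvu) (gen_e1 hvu)).mp h
          rw [h3] at h5; simp at h5
        · exact h
        · have h5 := (pair_iff hf (gen_e2 hvu) hgag).mp h
          rw [hga] at h5; simp at h5
      exact Or.inr (Or.inr (Or.inl ⟨nA, nB, h3, h4⟩))
    · have h5 := (pair_iff hf (gen_e1 hvu) hgbg).mp h3
      rw [hgb] at h5; simp at h5
  · -- ga ↦ e2 v u, gb ↦ e1 v u
    have h4 : f (.e2 v u) = .ga u v := (pair_iff hf hgag (gen_e2 hvu)).mp hga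
    have h3 : f (.e1 v u) = .gb u v := (pair_iff hf hgbg (gen_e1 hvu)).mp hgb
    have nD : f (.e2 v u) ≠ .vin u := by rw [h4]; simp
    have nC : f (.e1 v u) ≠ .vout v := by rw [h3]; simp
    rcases s1 with h | h | h
    · have h5 : f (.e2 u v) = .e1 u v := (pair_iff hf (gen_e1 huv) (gen_e2 huv)).mp h
      exact Or.inl ⟨by rw [h]; simp, by rw [h5]; simp, nC, nD⟩
    · have hB : f (.e2 u v) = .vin v := by
        rcases s2 with h'|h'|h'
        · have h5 := (pair_iff hf (gen_e2 huv) (gen_e1 huv)).mp h'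
          rw [h] at h5; simp at h5
        · exact h'
        · have h5 := (pair_iff hf (gen_e2 huv) hgbg).mp h'
          rw [hgb] at h5; simp at h5
      exact Or.inr (Or.inl ⟨h, hB, nC, nD⟩)
    · have h5 := (pair_iff hf (gen_e1 huv) hgag).mp h
      rw [hga] at h5; simp at h5
  · -- ga ↦ e2 v u, gb ↦ e2 u v
    have h4 : f (.e2 v u) = .ga u v := (pair_iff hf hgag (gen_e2 hvu)).mp hga
    have h2 : f (.e2 u v) = .gb u v := (pair_iff hf hgbg (gen_e2 huv)).mp hgb
    have nD : f (.e2 v u) ≠ .vin u := by rw [h4]; simp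
    have nB : f (.e2 u v) ≠ .vin v := by rw [h2]; simp
    have hA : f (.e1 u v) = .vout u := by
      rcases s1 with h|h|h
      · have h5 := (pair_iff hf (gen_e1 huv) (gen_e2 huv)).mp h
        rw [h2] at h5; simp at h5
      · exact h
      · have h5 := (pair_iff hf (gen_e1 huv) hgag).mp h
        rw [hga] at h5; simp at h5
    have hC : f (.e1 v u) = .vout v := by
      rcases s3 with h|h|h
      · have h5 := (pair_iff hf (gen_e1 hvu) (gen_e2 hvu)).mp h
        rw [h4] at h5; simp at h5
      · exact h
      · have h5 := (pair_iff hf (gen_e1 hvu) hgbg).mp h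
        rw [hgb] at h5; simp at h5
    exact Or.inr (Or.inr (Or.inr (Or.inl ⟨hA, nB, hC, nD⟩)))

end Helpers4
section Helpers5
set_option linter.unusedSectionVars false

variable {V : Type*} [Fintype V] [DecidableEq V] {w : V × V → ℕ} {M : Finset (V × V)}
  {f : GPVert V → GPVert V} {u v : V}

lemma partA (hf : IsPMofGP w M f) (hM : IsMatching M) : IsEvadingCC w M (CN w M f) := by
  refine ⟨?_, ?_, ?_⟩
  · intro e he
    rw [mem_CN] at he
    cases e with
    | whole a b => exact ⟨he.1, he.2.1⟩
    | half1 a b => exact he.1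
    | half2 a b => exact he.1
  · intro x
    constructor
    · rw [outdeg_set hf x]; exact Finset.card_singleton _
    · rw [indeg_set hf x]; exact Finset.card_singleton _
  · intro u v hh
    have huv : u ≠ v := hh.1
    have hA : (TilE.half1 u v ∈ CN w M f) ↔ f (.e1 u v) = .vout u := by
      rw [mem_CN]
      exact ⟨fun h => (pair_iff hf gen_vout (gen_e1 huv)).mp h.2,
        fun h => ⟨hh, (pair_iff hf (gen_e1 huv) gen_vout).mp h⟩⟩
    have hB : (TilE.half2 u v ∈ CN w M f) ↔ f (.e2 u v) = .vin v := by
      rw [mem_CN]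
      exact ⟨fun h => (pair_iff hf gen_vin (gen_e2 huv)).mp h.2,
        fun h => ⟨hh, (pair_iff hf (gen_e2 huv) gen_vin).mp h⟩⟩
    have hC : (TilE.half1 v u ∈ CN w M f) ↔ f (.e1 v u) = .vout v := by
      rw [mem_CN]
      exact ⟨fun h => (pair_iff hf gen_vout (gen_e1 huv.symm)).mp h.2,
        fun h => ⟨hh.symm, (pair_iff hf (gen_e1 huv.symm) gen_vout).mp h⟩⟩
    have hD : (TilE.half2 v u ∈ CN w M f) ↔ f (.e2 v u) = .vin u := by
      rw [mem_CN]
      exact ⟨fun h => (pair_iff hf gen_vin (gen_e2 huv.symm)).mp h.2,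
        fun h => ⟨hh.symm, (pair_iff hf (gen_e2 huv.symm) gen_vin).mp h⟩⟩
    have hchar :
        (TilE.half1 u v ∉ CN w M f ∧ TilE.half2 u v ∉ CN w M f ∧
          TilE.half1 v u ∉ CN w M f ∧ TilE.half2 v u ∉ CN w M f) ∨
        (TilE.half1 u v ∈ CN w M f ∧ TilE.half2 u v ∈ CN w M f ∧
          TilE.half1 v u ∉ CN w M f ∧ TilE.half2 v u ∉ CN w M f) ∨
        (TilE.half1 u v ∉ CN w M f ∧ TilE.half2 u v ∉ CN w M f ∧
          TilE.half1 v u ∈ CN w M f ∧ TilE.half2 v u ∈ CN w M f) ∨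
        (TilE.half1 u v ∈ CN w M f ∧ TilE.half2 u v ∉ CN w M f ∧
          TilE.half1 v u ∈ CN w M f ∧ TilE.half2 v u ∉ CN w M f) ∨
        (TilE.half1 u v ∉ CN w M f ∧ TilE.half2 u v ∈ CN w M f ∧
          TilE.half1 v u ∉ CN w M f ∧ TilE.half2 v u ∈ CN w M f) := by
      simp only [hA, hB, hC, hD]
      rcases hh.2.2.2 with hm | hm
      · exact gadget_char hf hM hm hh
      · rcases gadget_char hf hM hm hh.symm with h|h|h|h|h
        · exact Or.inl ⟨h.2.2.1, h.2.2.2, h.1, h.2.1⟩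
        · exact Or.inr (Or.inr (Or.inl ⟨h.2.2.1, h.2.2.2, h.1, h.2.1⟩))
        · exact Or.inr (Or.inl ⟨h.2.2.1, h.2.2.2, h.1, h.2.1⟩)
        · exact Or.inr (Or.inr (Or.inr (Or.inl ⟨h.2.2.1, h.2.2.2, h.1, h.2.1⟩)))
        · exact Or.inr (Or.inr (Or.inr (Or.inr ⟨h.2.2.1, h.2.2.2, h.1, h.2.1⟩)))
    rcases hchar with ⟨m1, m2, m3, m4⟩ | ⟨m1, m2, m3, m4⟩ | ⟨m1, m2, m3, m4⟩ |
      ⟨m1, m2, m3, m4⟩ | ⟨m1, m2, m3, m4⟩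
    · refine ⟨Or.inl ?_, fun h => absurd h.1 m1, fun h => absurd h.1 m2⟩
      rw [Finset.insert_inter_of_notMem m1, Finset.insert_inter_of_notMem m2,
        Finset.insert_inter_of_notMem m3, Finset.singleton_inter_of_notMem m4]
      rfl
    · refine ⟨Or.inr ?_, fun h => absurd m2 h.2, fun h => absurd m1 h.2⟩
      rw [Finset.insert_inter_of_mem m1, Finset.insert_inter_of_mem m2,
        Finset.insert_inter_of_notMem m3, Finset.singleton_inter_of_notMem m4]
      simp
    · refine ⟨Or.inr ?_, fun h => absurd h.1 m1, fun h => absurd h.1 m2⟩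
      rw [Finset.insert_inter_of_notMem m1, Finset.insert_inter_of_notMem m2,
        Finset.insert_inter_of_mem m3, Finset.singleton_inter_of_mem m4]
      simp [huv]
    · refine ⟨Or.inr ?_, fun _ => ⟨m3, m4⟩, fun h => absurd h.1 m2⟩
      rw [Finset.insert_inter_of_mem m1, Finset.insert_inter_of_notMem m2,
        Finset.insert_inter_of_mem m3, Finset.singleton_inter_of_notMem m4]
      simp [huv]
    · refine ⟨Or.inr ?_, fun h => absurd h.1 m1, fun _ => ⟨m4, m3⟩⟩
      rw [Finset.insert_inter_of_notMem m1, Finset.insert_inter_of_mem m2,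
        Finset.insert_inter_of_notMem m3, Finset.singleton_inter_of_mem m4]
      simp [huv]

end Helpers5
section Helpers6
set_option linter.unusedSectionVars false

variable {V : Type*} [Fintype V] [DecidableEq V]

/-- Explicit equivalence used to decompose sums over `GPVert V`. -/
def gpEquiv (V : Type*) : (V ⊕ V ⊕ (V × V) ⊕ (V × V) ⊕ (V × V) ⊕ (V × V)) ≃ GPVert V where
  toFun x := match x with
    | .inl u => .vin u
    | .inr (.inl u) => .vout u
    | .inr (.inr (.inl p)) => .e1 p.1 p.2
    | .inr (.inr (.inr (.inl p))) => .e2 p.1 p.2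
    | .inr (.inr (.inr (.inr (.inl p)))) => .ga p.1 p.2
    | .inr (.inr (.inr (.inr (.inr p)))) => .gb p.1 p.2
  invFun y := match y with
    | .vin u => .inl u
    | .vout u => .inr (.inl u)
    | .e1 a b => .inr (.inr (.inl (a, b)))
    | .e2 a b => .inr (.inr (.inr (.inl (a, b))))
    | .ga a b => .inr (.inr (.inr (.inr (.inl (a, b)))))
    | .gb a b => .inr (.inr (.inr (.inr (.inr (a, b)))))
  left_inv x := by rcases x with u | u | p | p | p | p <;> rfl
  right_inv y := by cases y <;> rfl

lemma sum_gpvert (F : GPVert V → ℚ) :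
    ∑ x : GPVert V, F x =
      (∑ u, F (.vin u)) + (∑ u, F (.vout u)) + (∑ p : V × V, F (.e1 p.1 p.2)) +
      (∑ p : V × V, F (.e2 p.1 p.2)) + (∑ p : V × V, F (.ga p.1 p.2)) +
      (∑ p : V × V, F (.gb p.1 p.2)) := by
  rw [← Equiv.sum_comp (gpEquiv V) F]
  simp only [Fintype.sum_sum_type]
  have h1 : ∀ u : V, F (gpEquiv V (.inl u)) = F (.vin u) := fun _ => rfl
  simp only [h1]
  ring_nf
  rfl

/-- Explicit equivalence used to decompose sums over `TilE V`. -/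
def tilEquiv (V : Type*) : ((V × V) ⊕ (V × V) ⊕ (V × V)) ≃ TilE V where
  toFun x := match x with
    | .inl p => .whole p.1 p.2
    | .inr (.inl p) => .half1 p.1 p.2
    | .inr (.inr p) => .half2 p.1 p.2
  invFun y := match y with
    | .whole a b => .inl (a, b)
    | .half1 a b => .inr (.inl (a, b))
    | .half2 a b => .inr (.inr (a, b))
  left_inv x := by rcases x with p | p | p <;> rfl
  right_inv y := by cases y <;> rfl

lemma sum_tile (F : TilE V → ℚ) :
    ∑ x : TilE V, F x =
      (∑ p : V × V, F (.whole p.1 p.2)) + (∑ p : V × V, F (.half1 p.1 p.2)) +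
      (∑ p : V × V, F (.half2 p.1 p.2)) := by
  rw [← Equiv.sum_comp (tilEquiv V) F]
  simp only [Fintype.sum_sum_type]
  ring_nf
  rfl

end Helpers6
section Helpers7
set_option linter.unusedSectionVars false

variable {V : Type*} [Fintype V] [DecidableEq V] {w : V × V → ℕ} {M : Finset (V × V)}
  {f : GPVert V → GPVert V} {u v : V}

lemma gpw_ga (a b : V) (y : GPVert V) : gpw w (.ga a b) y = 0 := by cases y <;> rfl

lemma gpw_gb (a b : V) (y : GPVert V) : gpw w (.gb a b) y = 0 := by cases y <;> rfl

lemma e1_vout_iff (hf : IsPMofGP w M f) (huv : u ≠ v) :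
    f (.e1 u v) = .vout u ↔ v = outF f u := by
  rw [pair_iff hf (gen_e1 huv) gen_vout, vout_iff hf]

lemma e2_vin_iff (hf : IsPMofGP w M f) (huv : u ≠ v) :
    f (.e2 u v) = .vin v ↔ u = inF f v := by
  rw [pair_iff hf (gen_e2 huv) gen_vin, vin_iff hf]

lemma e1_term (hf : IsPMofGP w M f) (u v : V) :
    (if Genuine w M (.e1 u v) then gpw w (.e1 u v) (f (.e1 u v)) else 0) =
      if v = outF f u then (w (u, v) : ℚ) / 2 else 0 := by
  by_cases huv : u = v
  · subst huv
    rw [if_neg (show ¬ Genuine w M (GPVert.e1 u u) from fun h => h rfl),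
      if_neg (fun h => (outF_spec hf u).1 h)]
  · rw [if_pos (show Genuine w M (GPVert.e1 u v) from huv)]
    rcases adj_e1_shape (hf (.e1 u v) (gen_e1 huv)).2 with h | h | ⟨h, _⟩ | ⟨h, _⟩
    · rw [h, if_neg]
      · rfl
      · intro hv
        have h2 := (e1_vout_iff hf huv).mpr hv
        rw [h] at h2; simp at h2
    · rw [h, if_pos ((e1_vout_iff hf huv).mp h)]
      simp [gpw]
    · rw [h, if_neg]
      · rfl
      · intro hv
        have h2 := (e1_vout_iff hf huv).mpr hv
        rw [h] at h2; simp at h2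
    · rw [h, if_neg]
      · rfl
      · intro hv
        have h2 := (e1_vout_iff hf huv).mpr hv
        rw [h] at h2; simp at h2

lemma e2_term (hf : IsPMofGP w M f) (u v : V) :
    (if Genuine w M (.e2 u v) then gpw w (.e2 u v) (f (.e2 u v)) else 0) =
      if u = inF f v then (w (u, v) : ℚ) / 2 else 0 := by
  by_cases huv : u = v
  · subst huv
    rw [if_neg (show ¬ Genuine w M (GPVert.e2 u u) from fun h => h rfl),
      if_neg (fun h => (inF_spec hf u).1 h.symm)]
  · rw [if_pos (show Genuine w M (GPVert.e2 u v) from huv)]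
    rcases adj_e2_shape (hf (.e2 u v) (gen_e2 huv)).2 with h | h | ⟨h, _⟩ | ⟨h, _⟩
    · rw [h, if_neg]
      · rfl
      · intro hv
        have h2 := (e2_vin_iff hf huv).mpr hv
        rw [h] at h2; simp at h2
    · rw [h, if_pos ((e2_vin_iff hf huv).mp h)]
      simp [gpw]
    · rw [h, if_neg]
      · rfl
      · intro hv
        have h2 := (e2_vin_iff hf huv).mpr hv
        rw [h] at h2; simp at h2
    · rw [h, if_neg]
      · rfl
      · intro hv
        have h2 := (e2_vin_iff hf huv).mpr hv
        rw [h] at h2; simp at h2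

lemma pmWeight_eq (hf : IsPMofGP w M f) :
    pmWeight w M f =
      (∑ u, (w (u, outF f u) : ℚ) / 2) + ∑ v, (w (inF f v, v) : ℚ) / 2 := by
  unfold pmWeight
  rw [sum_gpvert]
  have hvin : ∀ u : V, (if Genuine w M (GPVert.vin u) then gpw w (.vin u) (f (.vin u)) else 0) =
      (w (inF f u, u) : ℚ) / 2 := by
    intro u
    rw [if_pos (show Genuine w M (GPVert.vin u) from trivial), (inF_spec hf u).2]
    simp [gpw]
  have hvout : ∀ u : V, (if Genuine w M (GPVert.vout u) then gpw w (.vout u) (f (.vout u)) else 0) =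
      (w (u, outF f u) : ℚ) / 2 := by
    intro u
    rw [if_pos (show Genuine w M (GPVert.vout u) from trivial), (outF_spec hf u).2]
    simp [gpw]
  simp only [hvin, hvout, e1_term hf, e2_term hf, gpw_ga, gpw_gb, ite_self]
  rw [Fintype.sum_prod_type, Fintype.sum_prod_type_right]
  simp only [Finset.sum_ite_eq', Finset.mem_univ, if_pos, Finset.sum_const_zero]
  ring

lemma per_pair (hf : IsPMofGP w M f) (u v : V) :
    ((if CNpred w M f (.whole u v) then tilw w (.whole u v) else 0) +
     (if CNpred w M f (.half1 u v) then tilw w (.half1 u v) else 0) +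
     (if CNpred w M f (.half2 u v) then tilw w (.half2 u v) else 0)) =
    (if v = outF f u then (w (u, v) : ℚ) / 2 else 0) +
      (if u = inF f v then (w (u, v) : ℚ) / 2 else 0) := by
  by_cases hmh : MHit w M u v
  · have c1 : CNpred w M f (.half1 u v) ↔ v = outF f u :=
      ⟨fun h => (vout_iff hf).mp h.2, fun h => ⟨hmh, (vout_iff hf).mpr h⟩⟩
    have c2 : CNpred w M f (.half2 u v) ↔ u = inF f v :=
      ⟨fun h => (vin_iff hf).mp h.2, fun h => ⟨hmh, (vin_iff hf).mpr h⟩⟩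
    rw [if_neg (show ¬ CNpred w M f (TilE.whole u v) from fun h => h.2.1 hmh)]
    simp only [c1, c2, tilw]
    ring
  · have hc : CNpred w M f (.whole u v) ↔ v = outF f u := by
      constructor
      · rintro ⟨_, _, h1, _⟩
        exact (vout_iff hf).mp h1
      · intro hv
        have huv : u ≠ v := by
          rintro rfl
          exact (outF_spec hf u).1 hv
        have h1 := (vout_iff hf).mpr hv
        exact ⟨huv, hmh, h1, out_imp_in hf hmh huv h1⟩
    have hio : v = outF f u ↔ u = inF f v := by
      constructor
      · intro hv
        have huv : u ≠ v := by
          rintro rfl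
          exact (outF_spec hf u).1 hv
        exact (vin_iff hf).mp (out_imp_in hf hmh huv ((vout_iff hf).mpr hv))
      · intro hu
        have huv : u ≠ v := by
          rintro rfl
          exact (inF_spec hf u).1 hu.symm
        exact (vout_iff hf).mp (in_imp_out hf hmh huv ((vin_iff hf).mpr hu))
    rw [if_neg (show ¬ CNpred w M f (TilE.half1 u v) from fun h => hmh h.1),
      if_neg (show ¬ CNpred w M f (TilE.half2 u v) from fun h => hmh h.1)]
    by_cases hv : v = outF f u
    · rw [if_pos (show CNpred w M f (TilE.whole u v) from (hc).mpr hv), if_pos hv, if_pos (hio.mp hv)]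
      show ((w (u, v) : ℚ)) + 0 + 0 = _
      ring
    · rw [if_neg (show ¬ CNpred w M f (TilE.whole u v) from fun h => hv (hc.mp h)), if_neg hv,
      if_neg (fun h => hv (hio.mpr h))]
      ring

lemma CN_weight (hf : IsPMofGP w M f) :
    ∑ e ∈ CN w M f, tilw w e = pmWeight w M f := by
  rw [pmWeight_eq hf, CN, Finset.sum_filter, sum_tile, ← Finset.sum_add_distrib,
    ← Finset.sum_add_distrib]
  have := fun p : V × V => per_pair hf p.1 p.2
  rw [Finset.sum_congr rfl (fun p _ => this p)]
  rw [Finset.sum_add_distrib, Fintype.sum_prod_type, Fintype.sum_prod_type_right]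
  simp only [Finset.sum_ite_eq', Finset.mem_univ, if_pos]

end Helpers7
section Helpers8
set_option linter.unusedSectionVars false

variable {V : Type*} [Fintype V] [DecidableEq V] {w : V × V → ℕ} {M : Finset (V × V)}

/-- The perfect matching of `G'` induced by a Hamiltonian tour `σ`. -/
def tourPM (σ : Equiv.Perm V) (w : V × V → ℕ) (M : Finset (V × V)) :
    GPVert V → GPVert V
  | .vout u => .e1 u (σ u)
  | .vin v => .e2 (σ⁻¹ v) v
  | .e1 u v =>
      if v = σ u then .vout u
      else if (u, v) ∈ M ∧ MHit w M u v then .ga u v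
      else if (v, u) ∈ M ∧ MHit w M v u ∧ u = σ v then .gb v u
      else .e2 u v
  | .e2 u v =>
      if v = σ u then .vin v
      else if (u, v) ∈ M ∧ MHit w M u v then .gb u v
      else if (v, u) ∈ M ∧ MHit w M v u ∧ u = σ v then .ga v u
      else .e1 u v
  | .ga u v => if v = σ u then .e2 v u else .e1 u v
  | .gb u v => if v = σ u then .e1 v u else .e2 u v

variable {σ : Equiv.Perm V}

lemma tourPM_vout (u : V) : tourPM σ w M (.vout u) = .e1 u (σ u) := rfl
lemma tourPM_vin (v : V) : tourPM σ w M (.vin v) = .e2 (σ⁻¹ v) v := rfl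
lemma tourPM_e1 (u v : V) : tourPM σ w M (.e1 u v) =
    if v = σ u then .vout u
    else if (u, v) ∈ M ∧ MHit w M u v then .ga u v
    else if (v, u) ∈ M ∧ MHit w M v u ∧ u = σ v then .gb v u
    else .e2 u v := rfl
lemma tourPM_e2 (u v : V) : tourPM σ w M (.e2 u v) =
    if v = σ u then .vin v
    else if (u, v) ∈ M ∧ MHit w M u v then .gb u v
    else if (v, u) ∈ M ∧ MHit w M v u ∧ u = σ v then .ga v u
    else .e1 u v := rfl
lemma tourPM_ga (u v : V) : tourPM σ w M (.ga u v) =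
    if v = σ u then .e2 v u else .e1 u v := rfl
lemma tourPM_gb (u v : V) : tourPM σ w M (.gb u v) =
    if v = σ u then .e1 v u else .e2 u v := rfl

lemma sigma_ne (hs : σ.support = Finset.univ) (u : V) : σ u ≠ u := by
  have : u ∈ σ.support := hs ▸ Finset.mem_univ u
  exact Equiv.Perm.mem_support.mp this

lemma sigma_inv_ne (hs : σ.support = Finset.univ) (v : V) : σ⁻¹ v ≠ v := by
  intro h
  have h2 := congrArg σ h
  simp only [← Equiv.Perm.mul_apply, mul_inv_cancel, Equiv.Perm.one_apply] at h2
  exact sigma_ne hs v h2.symm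

lemma no_two_cycle (hc : σ.IsCycle) (hs : σ.support = Finset.univ)
    (h3 : 3 ≤ Fintype.card V) {u v : V} (h1 : σ u = v) (h2 : σ v = u) : False := by
  have hco : σ.IsCycleOn (Finset.univ : Finset V) := by
    have := hc.isCycleOn
    convert this using 1
    ext x
    simp [sigma_ne hs x]
  have hdvd : (Finset.univ : Finset V).card ∣ 2 :=
    (hco.pow_apply_eq (Finset.mem_univ u)).mp (by simp [pow_succ, h1, h2])
  have := Nat.le_of_dvd (by norm_num) hdvd
  rw [Finset.card_univ] at this
  omega

lemma tourPM_isPM (hM : IsMatching M) (hc : σ.IsCycle) (hs : σ.support = Finset.univ)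
    (h3 : 3 ≤ Fintype.card V) : IsPMofGP w M (tourPM σ w M) := by
  intro x hx
  cases x with
  | vout u =>
      refine ⟨?_, Or.inl (.outE u (σ u) (sigma_ne hs u).symm)⟩
      rw [tourPM_vout, tourPM_e1, if_pos rfl]
  | vin v =>
      refine ⟨?_, Or.inl (.inE (σ⁻¹ v) v (sigma_inv_ne hs v))⟩
      rw [tourPM_vin, tourPM_e2, if_pos (by simp)]
  | e1 u v =>
      have huv : u ≠ v := hx
      rw [tourPM_e1]
      by_cases h1 : v = σ u
      · rw [if_pos h1]
        exact ⟨by rw [tourPM_vout, ← h1], Or.inr (.outE u v huv)⟩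
      · rw [if_neg h1]
        by_cases h2 : (u, v) ∈ M ∧ MHit w M u v
        · rw [if_pos h2]
          exact ⟨by rw [tourPM_ga, if_neg h1], Or.inr (.ga1 u v h2.1 h2.2)⟩
        · rw [if_neg h2]
          by_cases h4 : (v, u) ∈ M ∧ MHit w M v u ∧ u = σ v
          · rw [if_pos h4]
            exact ⟨by rw [tourPM_gb, if_pos h4.2.2], Or.inr (.gb1 v u h4.1 h4.2.1)⟩
          · rw [if_neg h4]
            exact ⟨by rw [tourPM_e2, if_neg h1, if_neg h2, if_neg h4],
              Or.inl (.mid u v huv)⟩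
  | e2 u v =>
      have huv : u ≠ v := hx
      rw [tourPM_e2]
      by_cases h1 : v = σ u
      · rw [if_pos h1]
        refine ⟨?_, Or.inr (.inE u v huv)⟩
        rw [tourPM_vin]
        have : σ⁻¹ v = u := by rw [h1]; simp
        rw [this]
      · rw [if_neg h1]
        by_cases h2 : (u, v) ∈ M ∧ MHit w M u v
        · rw [if_pos h2]
          exact ⟨by rw [tourPM_gb, if_neg h1], Or.inr (.gb2 u v h2.1 h2.2)⟩
        · rw [if_neg h2]
          by_cases h4 : (v, u) ∈ M ∧ MHit w M v u ∧ u = σ v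
          · rw [if_pos h4]
            exact ⟨by rw [tourPM_ga, if_pos h4.2.2], Or.inr (.ga2 v u h4.1 h4.2.1)⟩
          · rw [if_neg h4]
            exact ⟨by rw [tourPM_e1, if_neg h1, if_neg h2, if_neg h4],
              Or.inr (.mid u v huv)⟩
  | ga u v =>
      obtain ⟨hm, hh⟩ := hx
      have hrev : (v, u) ∉ M := not_rev_mem hM hm
      rw [tourPM_ga]
      by_cases h1 : v = σ u
      · have hnvu : ¬ u = σ v := fun h => no_two_cycle hc hs h3 h1.symm h.symm
        rw [if_pos h1]
        refine ⟨?_, Or.inl (.ga2 u v hm hh)⟩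
        rw [tourPM_e2, if_neg hnvu,
          if_neg (show ¬((v, u) ∈ M ∧ MHit w M v u) from fun h => hrev h.1),
          if_pos (show (u, v) ∈ M ∧ MHit w M u v ∧ v = σ u from ⟨hm, hh, h1⟩)]
      · rw [if_neg h1]
        refine ⟨?_, Or.inl (.ga1 u v hm hh)⟩
        rw [tourPM_e1, if_neg h1, if_pos (show (u, v) ∈ M ∧ MHit w M u v from ⟨hm, hh⟩)]
  | gb u v =>
      obtain ⟨hm, hh⟩ := hx
      have hrev : (v, u) ∉ M := not_rev_mem hM hm
      rw [tourPM_gb]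
      by_cases h1 : v = σ u
      · have hnvu : ¬ u = σ v := fun h => no_two_cycle hc hs h3 h1.symm h.symm
        rw [if_pos h1]
        refine ⟨?_, Or.inl (.gb1 u v hm hh)⟩
        rw [tourPM_e1, if_neg hnvu,
          if_neg (show ¬((v, u) ∈ M ∧ MHit w M v u) from fun h => hrev h.1),
          if_pos (show (u, v) ∈ M ∧ MHit w M u v ∧ v = σ u from ⟨hm, hh, h1⟩)]
      · rw [if_neg h1]
        refine ⟨?_, Or.inl (.gb2 u v hm hh)⟩
        rw [tourPM_e2, if_neg h1, if_pos (show (u, v) ∈ M ∧ MHit w M u v from ⟨hm, hh⟩)]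

end Helpers8

section Helpers9
set_option linter.unusedSectionVars false

variable {V : Type*} [Fintype V] [DecidableEq V] {w : V × V → ℕ} {M : Finset (V × V)}
  {σ : Equiv.Perm V}

lemma tourPM_weight (hs : σ.support = Finset.univ) :
    pmWeight w M (tourPM σ w M) = ∑ u, (w (u, σ u) : ℚ) := by
  unfold pmWeight
  rw [sum_gpvert]
  have hvin : ∀ v : V, (if Genuine w M (GPVert.vin v) then
      gpw w (.vin v) (tourPM σ w M (.vin v)) else 0) = (w (σ⁻¹ v, v) : ℚ) / 2 := by
    intro v
    rw [if_pos (show Genuine w M (GPVert.vin v) from trivial), tourPM_vin]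
    simp [gpw]
  have hvout : ∀ u : V, (if Genuine w M (GPVert.vout u) then
      gpw w (.vout u) (tourPM σ w M (.vout u)) else 0) = (w (u, σ u) : ℚ) / 2 := by
    intro u
    rw [if_pos (show Genuine w M (GPVert.vout u) from trivial), tourPM_vout]
    simp [gpw]
  have he1 : ∀ u v : V, (if Genuine w M (GPVert.e1 u v) then
      gpw w (.e1 u v) (tourPM σ w M (.e1 u v)) else 0) =
      if v = σ u then (w (u, v) : ℚ) / 2 else 0 := by
    intro u v
    by_cases h1 : v = σ u
    · have huv : u ≠ v := by rintro rfl; exact sigma_ne hs u h1.symm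
      rw [if_pos (show Genuine w M (GPVert.e1 u v) from huv), tourPM_e1, if_pos h1, if_pos h1]
      simp [gpw]
    · rw [if_neg h1]
      by_cases huv : u = v
      · subst huv
        rw [if_neg (show ¬ Genuine w M (GPVert.e1 u u) from fun h => h rfl)]
      · rw [if_pos (show Genuine w M (GPVert.e1 u v) from huv), tourPM_e1, if_neg h1]
        split_ifs <;> rfl
  have he2 : ∀ u v : V, (if Genuine w M (GPVert.e2 u v) then
      gpw w (.e2 u v) (tourPM σ w M (.e2 u v)) else 0) =
      if v = σ u then (w (u, v) : ℚ) / 2 else 0 := by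
    intro u v
    by_cases h1 : v = σ u
    · have huv : u ≠ v := by rintro rfl; exact sigma_ne hs u h1.symm
      rw [if_pos (show Genuine w M (GPVert.e2 u v) from huv), tourPM_e2, if_pos h1, if_pos h1]
      simp [gpw]
    · rw [if_neg h1]
      by_cases huv : u = v
      · subst huv
        rw [if_neg (show ¬ Genuine w M (GPVert.e2 u u) from fun h => h rfl)]
      · rw [if_pos (show Genuine w M (GPVert.e2 u v) from huv), tourPM_e2, if_neg h1]
        split_ifs <;> rfl
  have he1' : ∀ p : V × V, (if Genuine w M (GPVert.e1 p.1 p.2) then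
      gpw w (.e1 p.1 p.2) (tourPM σ w M (.e1 p.1 p.2)) else 0) =
      if p.2 = σ p.1 then (w (p.1, p.2) : ℚ) / 2 else 0 := fun p => he1 p.1 p.2
  have he2' : ∀ p : V × V, (if Genuine w M (GPVert.e2 p.1 p.2) then
      gpw w (.e2 p.1 p.2) (tourPM σ w M (.e2 p.1 p.2)) else 0) =
      if p.2 = σ p.1 then (w (p.1, p.2) : ℚ) / 2 else 0 := fun p => he2 p.1 p.2
  simp only [hvin, hvout, he1', he2', gpw_ga, gpw_gb, ite_self]
  rw [Fintype.sum_prod_type]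
  simp only [Finset.sum_ite_eq', Finset.mem_univ, if_pos, Finset.sum_const_zero]
  have hre : ∑ v, (w (σ⁻¹ v, v) : ℚ) / 2 = ∑ u, (w (u, σ u) : ℚ) / 2 := by
    rw [← Equiv.sum_comp σ (fun v => (w (σ⁻¹ v, v) : ℚ) / 2)]
    simp
  rw [hre, ← Finset.sum_div]
  ring

end Helpers9

/-- (1) For every perfect matching `N` of `G'` (encoded by `f`), `C̃(N)` is a
cycle cover evading `M` and `w(C̃(N)) = w(N)`; (2) if moreover `|V| ≥ 3` and `N`
is a maximum weight perfect matching of `G'`, then `w(C̃(N)) ≥ OPT`. -/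
theorem stmt3 {V : Type*} [Fintype V] [DecidableEq V]
    (w : V × V → ℕ) (hw : ∀ e : V × V, w e ≤ 1)
    (M : Finset (V × V)) (hM : IsMatching M)
    (f : GPVert V → GPVert V) (hf : IsPMofGP w M f) :
    (IsEvadingCC w M (CN w M f) ∧
      ∑ e ∈ CN w M f, tilw w e = pmWeight w M f) ∧
    (3 ≤ Fintype.card V →
      (∀ g : GPVert V → GPVert V, IsPMofGP w M g → pmWeight w M g ≤ pmWeight w M f) →
      ∀ T : Finset (V × V), IsHamCycle T →
        (∑ e ∈ T, (w e : ℚ)) ≤ ∑ e ∈ CN w M f, tilw w e) := by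


  refine ⟨⟨partA hf hM, CN_weight hf⟩, ?_⟩
  intro h3 hmax T hT
  obtain ⟨σ, hc, hs, hTeq⟩ := hT
  have h1 : ∑ e ∈ T, (w e : ℚ) = ∑ u, (w (u, σ u) : ℚ) := by
    rw [hTeq, Finset.sum_image (fun a _ b _ h => congrArg Prod.fst h)]
  rw [CN_weight hf, h1, ← tourPM_weight hs]
  exact hmax _ (tourPM_isPM hM hc hs h3)
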